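/- Let A be a generalised Poisson affine space over a field k of characteristic zero. Then every Casimir of Frac(A) is a quotient of two homogeneous elements of A of the same weight: Cas(Frac(A)) = ⋃_{λ∈Λ} {ab⁻¹ : a, b ∈ A_λ, b ≠ 0}. -/

import Mathlib

/-- A Poisson bracket on a commutative `k`-algebra `A`: a `k`-bilinear Lie bracket
satisfying the Leibniz rule. -/
structure IsPoissonBracket (k : Type*) (A : Type*) [CommRing k] [CommRing A] [Algebra k A]
    (P : A → A → A) : Prop where
  add_left : ∀ a b c : A, P (a + b) c = P a c + P b c
  smul_left : ∀ (r : k) (a b : A), P (r • a) b = r • P a b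
  lie_skew : ∀ a b : A, P a b = - P b a
  jacobi : ∀ a b c : A, P a (P b c) + P b (P c a) + P c (P a b) = 0
  leibniz : ∀ a b c : A, P (a * b) c = a * P b c + b * P a c

set_option linter.unusedSectionVars false

section Basic
variable {k R : Type*} [CommRing k] [CommRing R] [Algebra k R] {P : R → R → R}

lemma pb_zero_left (hP : IsPoissonBracket k R P) (b : R) : P 0 b = 0 := by
  have h := hP.add_left 0 0 b
  rw [add_zero] at h
  exact (left_eq_add.mp h).symm ▸ rfl

lemma pb_zero_right (hP : IsPoissonBracket k R P) (a : R) : P a 0 = 0 := by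
  rw [hP.lie_skew, pb_zero_left hP, neg_zero]

lemma pb_add_right (hP : IsPoissonBracket k R P) (a b c : R) :
    P a (b + c) = P a b + P a c := by
  rw [hP.lie_skew, hP.add_left, neg_add, ← hP.lie_skew, ← hP.lie_skew]

lemma pb_neg_left (hP : IsPoissonBracket k R P) (a b : R) : P (-a) b = - P a b := by
  have h := hP.add_left a (-a) b
  rw [add_neg_cancel, pb_zero_left hP] at h
  linear_combination -h

lemma pb_neg_right (hP : IsPoissonBracket k R P) (a b : R) : P a (-b) = - P a b := by
  rw [hP.lie_skew, pb_neg_left hP, ← hP.lie_skew]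

lemma pb_sub_left (hP : IsPoissonBracket k R P) (a b c : R) :
    P (a - b) c = P a c - P b c := by
  rw [sub_eq_add_neg, hP.add_left, pb_neg_left hP, sub_eq_add_neg]

lemma pb_sub_right (hP : IsPoissonBracket k R P) (a b c : R) :
    P a (b - c) = P a b - P a c := by
  rw [sub_eq_add_neg, pb_add_right hP, pb_neg_right hP, sub_eq_add_neg]

lemma pb_mul_right (hP : IsPoissonBracket k R P) (a b c : R) :
    P a (b * c) = b * P a c + c * P a b := by
  rw [hP.lie_skew, hP.leibniz, neg_add, mul_comm b, mul_comm c, ← neg_mul, ← neg_mul,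
    ← hP.lie_skew, ← hP.lie_skew, mul_comm _ b, mul_comm _ c]

lemma pb_one_left (hP : IsPoissonBracket k R P) (b : R) : P 1 b = 0 := by
  have h := hP.leibniz 1 1 b
  simp only [one_mul] at h
  linear_combination -h

lemma pb_one_right (hP : IsPoissonBracket k R P) (a : R) : P a 1 = 0 := by
  rw [hP.lie_skew, pb_one_left hP, neg_zero]

lemma pb_nsmul_right (hP : IsPoissonBracket k R P) (m : ℕ) (a b : R) :
    P a (m • b) = m • P a b := by
  induction m with
  | zero => simp [pb_zero_right hP]
  | succ m ih => rw [succ_nsmul, succ_nsmul, pb_add_right hP, ih]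

lemma pb_smulk_right (hP : IsPoissonBracket k R P) (r : k) (a b : R) :
    P a (r • b) = r • P a b := by
  rw [hP.lie_skew, hP.smul_left, hP.lie_skew a b, smul_neg]

end Basic

set_option linter.unusedSectionVars false
section Main
variable {k A : Type*} [Field k] [CharZero k] [CommRing A] [IsDomain A] [Algebra k A]
variable {P : A → A → A} {n : ℕ} {x : Fin n → A} {l : Fin n → A → A}

/-- The weight functional attached to an exponent vector. -/
def Wt (l : Fin n → A → A) (cf : Fin n → ℕ) (d : A) : A := ∑ i, cf i • l i d

/-- Homogeneity of weight `cf`. -/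
def Hm (P : A → A → A) (l : Fin n → A → A) (cf : Fin n → ℕ) (a : A) : Prop :=
  ∀ d, P d a = Wt l cf d * a

section withhx
variable (hP : IsPoissonBracket k A P)
  (hx : ∀ (i : Fin n) (b : A), P b (x i) = l i b * x i)
  (hxne : ∀ i : Fin n, x i ≠ 0)
include hP hx hxne

lemma l_add (i : Fin n) (a b : A) : l i (a + b) = l i a + l i b := by
  have h : l i (a + b) * x i = (l i a + l i b) * x i := by
    rw [← hx, hP.add_left, hx, hx, add_mul]
  exact mul_right_cancel₀ (hxne i) h

lemma l_mul (i : Fin n) (a b : A) : l i (a * b) = a * l i b + b * l i a := by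
  have h : l i (a * b) * x i = (a * l i b + b * l i a) * x i := by
    rw [← hx, hP.leibniz, hx, hx]; ring
  exact mul_right_cancel₀ (hxne i) h

lemma l_smulk (i : Fin n) (r : k) (a : A) : l i (r • a) = r • l i a := by
  have h : l i (r • a) * x i = (r • l i a) * x i := by
    rw [← hx, hP.smul_left, hx, smul_mul_assoc]
  exact mul_right_cancel₀ (hxne i) h

lemma l_one (i : Fin n) : l i 1 = 0 := by
  have h : l i 1 * x i = 0 * x i := by
    rw [← hx, pb_one_left hP, zero_mul]
  exact mul_right_cancel₀ (hxne i) h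

lemma Wt_add (cf : Fin n → ℕ) (a b : A) : Wt l cf (a + b) = Wt l cf a + Wt l cf b := by
  simp only [Wt, ← Finset.sum_add_distrib]
  exact Finset.sum_congr rfl fun i _ => by rw [l_add hP hx hxne, smul_add]

lemma Wt_mul (cf : Fin n → ℕ) (a b : A) :
    Wt l cf (a * b) = a * Wt l cf b + b * Wt l cf a := by
  simp only [Wt, Finset.mul_sum, ← Finset.sum_add_distrib]
  exact Finset.sum_congr rfl fun i _ => by
    rw [l_mul hP hx hxne, smul_add, mul_smul_comm, mul_smul_comm]

lemma Wt_algebraMap (cf : Fin n → ℕ) (r : k) : Wt l cf (algebraMap k A r) = 0 := by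
  have : algebraMap k A r = r • (1 : A) := by rw [Algebra.smul_def, mul_one]
  simp only [Wt, this]
  refine Finset.sum_eq_zero fun i _ => ?_
  rw [l_smulk hP hx hxne, l_one hP hx hxne, smul_zero, smul_zero]

/-- Two weight functionals agreeing on the generators agree everywhere. -/
lemma Wt_ext (hgen : Algebra.adjoin k (Set.range x) = ⊤) (cf₁ cf₂ : Fin n → ℕ)
    (h : ∀ i, Wt l cf₁ (x i) = Wt l cf₂ (x i)) (d : A) : Wt l cf₁ d = Wt l cf₂ d := by
  let S : Subalgebra k A :=
    { carrier := {d | Wt l cf₁ d = Wt l cf₂ d}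
      mul_mem' := fun {a b} ha hb => by
        simp only [Set.mem_setOf_eq] at *
        rw [Wt_mul hP hx hxne, Wt_mul hP hx hxne, ha, hb]
      add_mem' := fun {a b} ha hb => by
        simp only [Set.mem_setOf_eq] at *
        rw [Wt_add hP hx hxne, Wt_add hP hx hxne, ha, hb]
      algebraMap_mem' := fun r => by
        simp only [Set.mem_setOf_eq, Wt_algebraMap hP hx hxne] }
  have hle : Algebra.adjoin k (Set.range x) ≤ S := by
    rw [Algebra.adjoin_le_iff]
    rintro _ ⟨i, rfl⟩
    exact h i
  rw [hgen] at hle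
  exact hle Algebra.mem_top

end withhx
end Main

section Main2
variable {k A : Type*} [Field k] [CharZero k] [CommRing A] [IsDomain A] [Algebra k A]
variable {P : A → A → A} {n : ℕ} {x : Fin n → A} {l : Fin n → A → A}
variable (hP : IsPoissonBracket k A P)
  (hx : ∀ (i : Fin n) (b : A), P b (x i) = l i b * x i)
  (hxne : ∀ i : Fin n, x i ≠ 0)
  (hcomm : ∀ (i j : Fin n) (a : A), l i (l j a) = l j (l i a))
lemma Wt_single (i : Fin n) (d : A) : Wt l (Pi.single i 1) d = l i d := by
  unfold Wt
  rw [Finset.sum_eq_single i]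
  · simp
  · intro j _ hj; simp [Pi.single_apply, hj]
  · simp

lemma Wt_addcf (cf₁ cf₂ : Fin n → ℕ) (d : A) :
    Wt l (cf₁ + cf₂) d = Wt l cf₁ d + Wt l cf₂ d := by
  unfold Wt
  rw [← Finset.sum_add_distrib]
  exact Finset.sum_congr rfl fun i _ => by simp [add_smul]

include hP hx hxne hcomm

/-- Key consequence of the Jacobi identity: `l j (x i)` is homogeneous of weight `eᵢ`. -/
lemma key_lx (i j : Fin n) (d : A) : P d (l j (x i)) = l i d * l j (x i) := by
  have e1 : P (x i) (x j) = l j (x i) * x j := hx j (x i)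
  have e2 : P (x j) (x i) = l i (x j) * x i := hx i (x j)
  have star : l i (x j) * x i = -(l j (x i) * x j) := by
    rw [← e2, hP.lie_skew, e1]
  have hj := hP.jacobi (x i) (x j) d
  have t1 : P (x i) (P (x j) d) =
      -(l j d * (l j (x i) * x j)) + x j * (l i (l j d) * x i) := by
    have h1 : P (x j) d = -(l j d * x j) := by rw [hP.lie_skew, hx]
    have h2 : P (x i) (l j d) = -(l i (l j d) * x i) := by rw [hP.lie_skew, hx]
    rw [h1, pb_neg_right hP, pb_mul_right hP, e1, h2]; ring
  have t2 : P (x j) (P d (x i)) =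
      l i d * (l i (x j) * x i) - x i * (l j (l i d) * x j) := by
    have h2 : P (x j) (l i d) = -(l j (l i d) * x j) := by rw [hP.lie_skew, hx]
    rw [hx, pb_mul_right hP, e2, h2]; ring
  have t3 : P d (P (x i) (x j)) =
      l j (x i) * (l j d * x j) + x j * P d (l j (x i)) := by
    rw [e1, pb_mul_right hP, hx]
  rw [t1, t2, t3, hcomm i j d] at hj
  refine mul_left_cancel₀ (hxne j) ?_
  linear_combination hj - l i d * star

lemma Hm_zero (cf : Fin n → ℕ) : Hm P l cf (0 : A) := fun d => by
  rw [pb_zero_right hP, mul_zero]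

lemma Hm_one : Hm P l 0 (1 : A) := fun d => by
  rw [pb_one_right hP]
  simp [Wt]

lemma Hm_x (i : Fin n) : Hm P l (Pi.single i 1) (x i) := fun d => by
  rw [hx, Wt_single]

lemma Hm_mul {cf₁ cf₂ : Fin n → ℕ} {a b : A} (ha : Hm P l cf₁ a) (hb : Hm P l cf₂ b) :
    Hm P l (cf₁ + cf₂) (a * b) := fun d => by
  rw [pb_mul_right hP, ha, hb, Wt_addcf]; ring

lemma Hm_congr {cf₁ cf₂ : Fin n → ℕ} {a : A} (h : ∀ d, Wt l cf₁ d = Wt l cf₂ d)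
    (ha : Hm P l cf₁ a) : Hm P l cf₂ a := fun d => by rw [ha, h]

lemma Hm_add {cf : Fin n → ℕ} {a b : A} (ha : Hm P l cf a) (hb : Hm P l cf b) :
    Hm P l cf (a + b) := fun d => by
  rw [pb_add_right hP, ha, hb, mul_add]

lemma Hm_sub {cf : Fin n → ℕ} {a b : A} (ha : Hm P l cf a) (hb : Hm P l cf b) :
    Hm P l cf (a - b) := fun d => by
  rw [pb_sub_right hP, ha, hb, mul_sub]

lemma Hm_nsmul {cf : Fin n → ℕ} {a : A} (m : ℕ) (ha : Hm P l cf a) :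
    Hm P l cf (m • a) := fun d => by
  rw [pb_nsmul_right hP, ha, mul_smul_comm]

lemma Hm_smulk {cf : Fin n → ℕ} {a : A} (r : k) (ha : Hm P l cf a) :
    Hm P l cf (r • a) := fun d => by
  rw [pb_smulk_right hP, ha, mul_smul_comm]

lemma Hm_Wt_x (cf : Fin n → ℕ) (i : Fin n) :
    Hm P l (Pi.single i 1) (Wt l cf (x i)) := by
  unfold Wt
  have : ∀ s : Finset (Fin n), Hm P l (Pi.single i 1) (∑ j ∈ s, cf j • l j (x i)) := by
    intro s
    induction s using Finset.induction_on with
    | empty => simpa using Hm_zero hP hx hxne hcomm (Pi.single i 1)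
    | insert _ _ hnot ih =>
      rw [Finset.sum_insert hnot]
      exact Hm_add hP hx hxne hcomm (Hm_nsmul hP hx hxne hcomm _ (fun d => by
        rw [key_lx hP hx hxne hcomm, Wt_single])) ih
  exact this Finset.univ

end Main2

section Main3
variable {k A : Type*} [Field k] [CharZero k] [CommRing A] [IsDomain A] [Algebra k A]
variable {P : A → A → A} {n : ℕ} {x : Fin n → A} {l : Fin n → A → A}

/-- Two weight vectors with the same weight functional. -/
def sameW (l : Fin n → A → A) (p q : (Fin n → ℕ) × A) : Prop :=
  ∀ d, Wt l p.1 d = Wt l q.1 d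

/-- A good decomposition list: homogeneous nonzero entries with
pairwise distinct weight functionals. -/
def GoodL (P : A → A → A) (l : Fin n → A → A) (M : List ((Fin n → ℕ) × A)) : Prop :=
  (∀ p ∈ M, Hm P l p.1 p.2 ∧ p.2 ≠ 0) ∧ M.Pairwise (fun p q => ¬ sameW l p q)

lemma GoodL_nil : GoodL P l ([] : List ((Fin n → ℕ) × A)) :=
  ⟨by simp, List.Pairwise.nil⟩

lemma list_sub_sum (M : List ((Fin n → ℕ) × A)) (g : (Fin n → ℕ) × A → A) (w : A) :
    (M.map (fun p => (g p - w) * p.2)).sum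
      = (M.map (fun p => g p * p.2)).sum - w * (M.map Prod.snd).sum := by
  induction M with
  | nil => simp
  | cons p t ih =>
    simp only [List.map_cons, List.sum_cons, ih]; ring

lemma clean' (M : List ((Fin n → ℕ) × A)) :
    ∃ M' : List ((Fin n → ℕ) × A), M'.Sublist M ∧ (∀ p ∈ M', p.2 ≠ 0) ∧
      (M'.map Prod.snd).sum = (M.map Prod.snd).sum := by
  induction M with
  | nil => exact ⟨[], List.Sublist.refl _, by simp, rfl⟩
  | cons p t ih =>
    obtain ⟨t', hsub, hne, hsum⟩ := ih
    by_cases hp : p.2 = 0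
    · exact ⟨t', hsub.trans (List.sublist_cons_self p t), hne, by simp [hsum, hp]⟩
    · refine ⟨p :: t', List.Sublist.cons₂ p hsub, ?_, by simp [hsum]⟩
      intro q hq
      rcases List.mem_cons.mp hq with rfl | hq'
      · exact hp
      · exact hne q hq'

variable (hP : IsPoissonBracket k A P)
  (hx : ∀ (i : Fin n) (b : A), P b (x i) = l i b * x i)
  (hxne : ∀ i : Fin n, x i ≠ 0)
  (hcomm : ∀ (i j : Fin n) (a : A), l i (l j a) = l j (l i a))
include hP hx hxne hcomm

lemma pb_sum_list (M : List ((Fin n → ℕ) × A)) (hhom : ∀ p ∈ M, Hm P l p.1 p.2) (d : A) :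
    P d ((M.map Prod.snd).sum) = (M.map (fun p => Wt l p.1 d * p.2)).sum := by
  induction M with
  | nil => simp [pb_zero_right hP]
  | cons p t ih =>
    simp only [List.map_cons, List.sum_cons]
    rw [pb_add_right hP, hhom p (List.mem_cons_self) d,
      ih (fun q hq => hhom q (List.mem_cons_of_mem _ hq))]

lemma insert_one : ∀ (M : List ((Fin n → ℕ) × A)), GoodL P l M →
    ∀ p : (Fin n → ℕ) × A, Hm P l p.1 p.2 → p.2 ≠ 0 →
    ∃ M' : List ((Fin n → ℕ) × A), GoodL P l M' ∧ (M'.map Prod.snd).sum = p.2 + (M.map Prod.snd).sum ∧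
      ∀ q ∈ M', sameW l q p ∨ ∃ r ∈ M, sameW l q r := by
  intro M
  induction M with
  | nil =>
    intro _ p hp hne
    refine ⟨[p], ⟨?_, ?_⟩, by simp, ?_⟩
    · intro q hq; rcases List.mem_cons.mp hq with rfl | hq'
      · exact ⟨hp, hne⟩
      · simp at hq'
    · simp
    · intro q hq; rcases List.mem_cons.mp hq with rfl | hq'
      · exact Or.inl (fun d => rfl)
      · simp at hq'
  | cons q t ih =>
    intro hg p hp hne
    have hgt : GoodL P l t :=
      ⟨fun r hr => hg.1 r (List.mem_cons_of_mem _ hr), (List.pairwise_cons.mp hg.2).2⟩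
    by_cases hs : sameW l p q
    · by_cases hz : q.2 + p.2 = 0
      · refine ⟨t, hgt, by simp only [List.map_cons, List.sum_cons]; linear_combination -hz, ?_⟩
        intro r hr; exact Or.inr ⟨r, List.mem_cons_of_mem _ hr, fun d => rfl⟩
      · refine ⟨(q.1, q.2 + p.2) :: t, ⟨?_, ?_⟩, ?_, ?_⟩
        · intro r hr; rcases List.mem_cons.mp hr with rfl | hr'
          · exact ⟨Hm_add hP hx hxne hcomm (hg.1 q (List.mem_cons_self)).1
              (Hm_congr hP hx hxne hcomm (fun d => hs d) hp), hz⟩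
          · exact hg.1 r (List.mem_cons_of_mem _ hr')
        · exact List.pairwise_cons.mpr
            ⟨fun r hr hsw => (List.pairwise_cons.mp hg.2).1 r hr hsw, hgt.2⟩
        · simp only [List.map_cons, List.sum_cons]; ring
        · intro r hr; rcases List.mem_cons.mp hr with rfl | hr'
          · exact Or.inr ⟨q, List.mem_cons_self, fun d => rfl⟩
          · exact Or.inr ⟨r, List.mem_cons_of_mem _ hr', fun d => rfl⟩
    · obtain ⟨t', hgt', hsum', hmem'⟩ := ih hgt p hp hne
      refine ⟨q :: t', ⟨?_, ?_⟩, ?_, ?_⟩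
      · intro r hr; rcases List.mem_cons.mp hr with rfl | hr'
        · exact hg.1 r (List.mem_cons_self)
        · exact hgt'.1 r hr'
      · refine List.pairwise_cons.mpr ⟨?_, hgt'.2⟩
        intro r hr hqr
        rcases hmem' r hr with hrp | ⟨r', hr', hrr'⟩
        · exact hs (fun d => ((hqr d).trans (hrp d)).symm)
        · exact (List.pairwise_cons.mp hg.2).1 r' hr' (fun d => (hqr d).trans (hrr' d))
      · simp only [List.map_cons, List.sum_cons, hsum']; ring
      · intro r hr; rcases List.mem_cons.mp hr with rfl | hr'
        · exact Or.inr ⟨r, List.mem_cons_self, fun d => rfl⟩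
        · rcases hmem' r hr' with h | ⟨r', hr'', hrr'⟩
          · exact Or.inl h
          · exact Or.inr ⟨r', List.mem_cons_of_mem _ hr'', hrr'⟩

lemma merge_lists : ∀ (M₂ : List ((Fin n → ℕ) × A)),
    (∀ p ∈ M₂, Hm P l p.1 p.2 ∧ p.2 ≠ 0) → ∀ M₁, GoodL P l M₁ →
    ∃ M', GoodL P l M' ∧
      (M'.map Prod.snd).sum = (M₂.map Prod.snd).sum + (M₁.map Prod.snd).sum := by
  intro M₂
  induction M₂ with
  | nil => intro _ M₁ hg; exact ⟨M₁, hg, by simp⟩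
  | cons p t ih =>
    intro hh M₁ hg
    obtain ⟨M₁', hg', hsum'⟩ := insert_one hP hx hxne hcomm M₁ hg p
      (hh p (List.mem_cons_self)).1 (hh p (List.mem_cons_self)).2
    obtain ⟨M'', hg'', hsum''⟩ := ih (fun r hr => hh r (List.mem_cons_of_mem _ hr)) M₁' hg'
    refine ⟨M'', hg'', ?_⟩
    rw [hsum'', hsum'.1]
    simp only [List.map_cons, List.sum_cons]; ring

lemma span_list (b : A) (hb : b ∈ Submodule.span k {a : A | ∃ cf, Hm P l cf a}) :
    ∃ M, GoodL P l M ∧ (M.map Prod.snd).sum = b := by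
  induction hb using Submodule.span_induction with
  | mem a ha =>
    by_cases haz : a = 0
    · exact ⟨[], GoodL_nil, by simp [haz]⟩
    · obtain ⟨cf, hcf⟩ := ha
      refine ⟨[(cf, a)], ⟨?_, ?_⟩, by simp⟩
      · intro q hq; rcases List.mem_cons.mp hq with rfl | hq'
        · exact ⟨hcf, haz⟩
        · simp at hq'
      · simp
  | zero => exact ⟨[], GoodL_nil, by simp⟩
  | add u v _ _ ihu ihv =>
    obtain ⟨Mu, hgu, hsu⟩ := ihu
    obtain ⟨Mv, hgv, hsv⟩ := ihv
    obtain ⟨M', hg', hs'⟩ := merge_lists hP hx hxne hcomm Mv hgv.1 Mu hgu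
    exact ⟨M', hg', by rw [hs', hsu, hsv]; ring⟩
  | smul r u _ ihu =>
    obtain ⟨M, hg, hsum⟩ := ihu
    by_cases hr : r = 0
    · exact ⟨[], GoodL_nil, by simp [hr]⟩
    · have hrA : algebraMap k A r ≠ 0 := fun h0 => hr (by
        have := (algebraMap k A).injective
        exact this (by rw [h0, map_zero]))
      refine ⟨M.map (fun p => (p.1, algebraMap k A r * p.2)), ⟨?_, ?_⟩, ?_⟩
      · intro q hq
        obtain ⟨p, hp, rfl⟩ := List.mem_map.mp hq
        refine ⟨?_, mul_ne_zero hrA (hg.1 p hp).2⟩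
        have := Hm_smulk hP hx hxne hcomm r (hg.1 p hp).1
        rwa [Algebra.smul_def] at this
      · exact List.Pairwise.map _ (fun a b h => h) hg.2
      · rw [List.map_map]
        have : (Prod.snd ∘ fun p : (Fin n → ℕ) × A => (p.1, algebraMap k A r * p.2))
            = fun p => algebraMap k A r * p.2 := rfl
        rw [this]
        have h2 : (M.map fun p : (Fin n → ℕ) × A => algebraMap k A r * p.2)
            = (M.map Prod.snd).map (fun y => algebraMap k A r * y) := by
          rw [List.map_map]; rfl
        rw [h2]
        rw [show (M.map Prod.snd).map (fun y => algebraMap k A r * y)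
            = (M.map Prod.snd).map (fun y => r • y) from by
          simp only [Algebra.smul_def]]
        rw [← List.smul_sum, hsum, Algebra.smul_def]

end Main3

section Main4
variable {k A : Type*} [Field k] [CharZero k] [CommRing A] [IsDomain A] [Algebra k A]
variable {P : A → A → A} {n : ℕ} {x : Fin n → A} {l : Fin n → A → A}
variable (hP : IsPoissonBracket k A P)
  (hx : ∀ (i : Fin n) (b : A), P b (x i) = l i b * x i)
  (hxne : ∀ i : Fin n, x i ≠ 0)
  (hcomm : ∀ (i j : Fin n) (a : A), l i (l j a) = l j (l i a))
  (hgen : Algebra.adjoin k (Set.range x) = ⊤)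
include hP hx hxne hcomm hgen

/-- Independence: homogeneous elements with pairwise distinct weight functionals
summing to zero must all vanish. -/
lemma indep : ∀ (m : ℕ) (M : List ((Fin n → ℕ) × A)), M.length ≤ m →
    (∀ p ∈ M, Hm P l p.1 p.2) → M.Pairwise (fun p q => ¬ sameW l p q) →
    (M.map Prod.snd).sum = 0 → ∀ p ∈ M, p.2 = 0 := by
  intro m
  induction m with
  | zero =>
    intro M hlen _ _ _ p hp
    rw [List.eq_nil_of_length_eq_zero (Nat.le_zero.mp hlen)] at hp
    simp at hp
  | succ m ih =>
    intro M hlen hhom hpw hsum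
    cases M with
    | nil => intro p hp; simp at hp
    | cons p₀ t =>
      have hhomt : ∀ p ∈ t, Hm P l p.1 p.2 := fun p hp => hhom p (List.mem_cons_of_mem _ hp)
      have htail0 : ∀ q ∈ t, q.2 = 0 := by
        intro q hq
        by_contra hq2
        have hall : ∀ i, Wt l q.1 (x i) = Wt l p₀.1 (x i) := by
          intro i
          set w := Wt l p₀.1 (x i) with hw
          set f := fun p : (Fin n → ℕ) × A =>
            (Pi.single i 1 + p.1, (Wt l p.1 (x i) - w) * p.2) with hf
          have hsumf : ((t.map f).map Prod.snd).sum = 0 := by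
            have e1 : ((t.map f).map Prod.snd).sum
                = (t.map (fun p => (Wt l p.1 (x i) - w) * p.2)).sum := by
              rw [List.map_map]; rfl
            rw [e1, list_sub_sum, ← pb_sum_list hP hx hxne hcomm t hhomt (x i)]
            -- total sum over p₀ :: t is 0
            have hS : p₀.2 + (t.map Prod.snd).sum = 0 := by simpa using hsum
            have hP₀ : P (x i) p₀.2 = w * p₀.2 := hhom p₀ (List.mem_cons_self) (x i)
            have hfull : P (x i) (p₀.2 + (t.map Prod.snd).sum)
                = w * p₀.2 + P (x i) ((t.map Prod.snd).sum) := by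
              rw [pb_add_right hP, hP₀]
            rw [hS, pb_zero_right hP] at hfull
            have ht0 : P (x i) ((t.map Prod.snd).sum) = - (w * p₀.2) := by
              linear_combination -hfull
            have hTS : (t.map Prod.snd).sum = -p₀.2 := by linear_combination hS
            rw [ht0, hTS]; ring
          have key := ih (t.map f) (by simpa using Nat.le_of_succ_le_succ hlen)
            (by
              intro r hr
              obtain ⟨p, hp, rfl⟩ := List.mem_map.mp hr
              exact Hm_mul hP hx hxne hcomm
                (Hm_sub hP hx hxne hcomm (Hm_Wt_x hP hx hxne hcomm p.1 i)
                  (Hm_Wt_x hP hx hxne hcomm p₀.1 i))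
                (hhomt p hp))
            (by
              refine List.Pairwise.map f ?_ (List.pairwise_cons.mp hpw).2
              intro a b hab hsw
              refine hab (fun d => ?_)
              have := hsw d
              simp only [hf, Wt_addcf] at this
              exact add_left_cancel this)
            hsumf
          have hfq := key (f q) (List.mem_map_of_mem hq)
          simp only [hf] at hfq
          rcases mul_eq_zero.mp hfq with h | h
          · exact sub_eq_zero.mp h
          · exact absurd h hq2
        have hsw : sameW l q p₀ := fun d => Wt_ext hP hx hxne hgen q.1 p₀.1 hall d
        exact (List.pairwise_cons.mp hpw).1 q hq (fun d => (hsw d).symm)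
      intro p hp
      rcases List.mem_cons.mp hp with rfl | hp'
      · have ht : (t.map Prod.snd).sum = 0 := List.sum_eq_zero (by
          intro y hy
          obtain ⟨q, hq, rfl⟩ := List.mem_map.mp hy
          exact htail0 q hq)
        have : p.2 + (t.map Prod.snd).sum = 0 := by simpa using hsum
        rw [ht, add_zero] at this
        exact this
      · exact htail0 p hp'

/-- Extraction: from a good decomposition of a nonzero element of a Poisson-stable
set `J`, produce a nonzero homogeneous element of `J`. -/
lemma extract (J : A → Prop) (hJP : ∀ d b, J b → J (P d b))
    (hJmul : ∀ c b, J b → J (c * b)) (hJsub : ∀ a b, J a → J b → J (a - b)) :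
    ∀ (m : ℕ) (M : List ((Fin n → ℕ) × A)), M.length ≤ m → GoodL P l M →
    ∀ b, J b → b ≠ 0 → (M.map Prod.snd).sum = b →
    ∃ (cf : Fin n → ℕ) (c : A), J c ∧ c ≠ 0 ∧ Hm P l cf c := by
  intro m
  induction m with
  | zero =>
    intro M hlen _ b _ hbne hsum
    rw [List.eq_nil_of_length_eq_zero (Nat.le_zero.mp hlen)] at hsum
    exact absurd hsum.symm hbne
  | succ m ih =>
    intro M hlen hg b hJb hbne hsum
    cases M with
    | nil => simp at hsum; exact absurd hsum.symm hbne
    | cons p₀ t =>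
      cases t with
      | nil =>
        refine ⟨p₀.1, b, hJb, hbne, ?_⟩
        have hb : b = p₀.2 := by simpa using hsum.symm
        rw [hb]
        exact (hg.1 p₀ (List.mem_cons_self)).1
      | cons p₁ t' =>
        by_cases hex : ∃ q ∈ p₁ :: t', ∃ i, Wt l q.1 (x i) ≠ Wt l p₀.1 (x i)
        · obtain ⟨q, hq, i, hqi⟩ := hex
          set w := Wt l p₀.1 (x i) with hw
          set f := fun p : (Fin n → ℕ) × A =>
            (Pi.single i 1 + p.1, (Wt l p.1 (x i) - w) * p.2) with hf
          set b' := P (x i) b - w * b with hb'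
          have hJb' : J b' := hJsub _ _ (hJP _ _ hJb) (hJmul _ _ hJb)
          have hhomt : ∀ p ∈ p₁ :: t', Hm P l p.1 p.2 :=
            fun p hp => (hg.1 p (List.mem_cons_of_mem _ hp)).1
          have hhomf : ∀ r ∈ (p₁ :: t').map f, Hm P l r.1 r.2 := by
            intro r hr
            obtain ⟨p, hp, rfl⟩ := List.mem_map.mp hr
            exact Hm_mul hP hx hxne hcomm
              (Hm_sub hP hx hxne hcomm (Hm_Wt_x hP hx hxne hcomm p.1 i)
                (Hm_Wt_x hP hx hxne hcomm p₀.1 i))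
              (hhomt p hp)
          have hpwf : ((p₁ :: t').map f).Pairwise (fun p q => ¬ sameW l p q) := by
            refine List.Pairwise.map f ?_ (List.pairwise_cons.mp hg.2).2
            intro a c hac hsw
            refine hac (fun d => ?_)
            have := hsw d
            simp only [hf, Wt_addcf] at this
            exact add_left_cancel this
          have hsumf : (((p₁ :: t').map f).map Prod.snd).sum = b' := by
            have e1 : (((p₁ :: t').map f).map Prod.snd).sum
                = ((p₁ :: t').map (fun p => (Wt l p.1 (x i) - w) * p.2)).sum := by
              rw [List.map_map]; rfl
            rw [e1, list_sub_sum, ← pb_sum_list hP hx hxne hcomm _ hhomt (x i)]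
            have hS : p₀.2 + ((p₁ :: t').map Prod.snd).sum = b := by simpa using hsum
            have hP₀ : P (x i) p₀.2 = w * p₀.2 :=
              (hg.1 p₀ (List.mem_cons_self)).1 (x i)
            have hfull : P (x i) b = w * p₀.2 + P (x i) (((p₁ :: t').map Prod.snd).sum) := by
              rw [← hS, pb_add_right hP, hP₀]
            have hTS : ((p₁ :: t').map Prod.snd).sum = b - p₀.2 := by
              linear_combination hS
            rw [hTS] at hfull ⊢
            rw [hb']
            linear_combination -hfull
          have hb'ne : b' ≠ 0 := by
            intro h0
            have hzero := indep hP hx hxne hcomm hgen ((p₁ :: t').map f).length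
              ((p₁ :: t').map f) le_rfl hhomf hpwf (hsumf.trans h0)
            have hfq := hzero (f q) (List.mem_map_of_mem hq)
            simp only [hf] at hfq
            rcases mul_eq_zero.mp hfq with h | h
            · exact hqi (sub_eq_zero.mp h)
            · exact (hg.1 q (List.mem_cons_of_mem _ hq)).2 h
          obtain ⟨M₂, hsub, hne₂, hsum₂⟩ := clean' ((p₁ :: t').map f)
          refine ih M₂ ?_ ⟨?_, ?_⟩ b' hJb' hb'ne (hsum₂.trans hsumf)
          · have h1 : M₂.length ≤ ((p₁ :: t').map f).length := hsub.length_le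
            have h2 : ((p₁ :: t').map f).length = (p₁ :: t').length := by simp
            have h3 : (p₁ :: t').length ≤ m := by
              have := hlen
              simp only [List.length_cons] at this ⊢
              omega
            omega
          · exact fun r hr => ⟨hhomf r (hsub.subset hr), hne₂ r hr⟩
          · exact List.Pairwise.sublist hsub hpwf
        · exfalso
          push_neg at hex
          have h1 : sameW l p₁ p₀ := fun d =>
            Wt_ext hP hx hxne hgen p₁.1 p₀.1 (hex p₁ (List.mem_cons_self)) d
          exact (List.pairwise_cons.mp hg.2).1 p₁ (List.mem_cons_self)
            (fun d => (h1 d).symm)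

end Main4

/-- In a generalised Poisson affine space `A`, the Casimirs of `Frac(A)` are exactly the
quotients `a·b⁻¹` of two homogeneous elements of `A` of the same weight. -/
theorem casimirs_are_quotients_of_homogeneous
    {k A K : Type*} [Field k] [CharZero k] [CommRing A] [IsDomain A] [Algebra k A]
    [Field K] [Algebra A K] [IsFractionRing A K] [Algebra k K] [IsScalarTower k A K]
    (P : A → A → A) (hP : IsPoissonBracket k A P)
    (n : ℕ) (x : Fin n → A) (l : Fin n → A → A)
    (hgen : Algebra.adjoin k (Set.range x) = ⊤)
    (hx : ∀ (i : Fin n) (b : A), P b (x i) = l i b * x i)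
    (hxne : ∀ i : Fin n, x i ≠ 0)
    (hcomm : ∀ (i j : Fin n) (a : A), l i (l j a) = l j (l i a))
    (Q : K → K → K) (hQ : IsPoissonBracket k K Q)
    (hext : ∀ a b : A, Q (algebraMap A K a) (algebraMap A K b) = algebraMap A K (P a b)) :
    ∀ q : K, (∀ c : K, Q c q = 0) ↔
      ∃ (cf : Fin n → ℕ) (a b : A), b ≠ 0 ∧
        (∀ d : A, P d a = (∑ i : Fin n, cf i • l i d) * a) ∧
        (∀ d : A, P d b = (∑ i : Fin n, cf i • l i d) * b) ∧
        q = algebraMap A K a * (algebraMap A K b)⁻¹ := by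
  intro q
  constructor
  · -- forward direction
    intro hq
    set J : A → Prop := fun b => ∃ a : A, algebraMap A K b * q = algebraMap A K a with hJdef
    have hJP : ∀ d b, J b → J (P d b) := by
      rintro d b ⟨a, hab⟩
      refine ⟨P d a, ?_⟩
      have h1 : Q (algebraMap A K d) (algebraMap A K b * q)
          = algebraMap A K b * Q (algebraMap A K d) q
            + q * Q (algebraMap A K d) (algebraMap A K b) := pb_mul_right hQ _ _ _
      rw [hab, hext, hq, hext] at h1
      linear_combination -h1
    have hJmul : ∀ c b, J b → J (c * b) := by
      rintro c b ⟨a, hab⟩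
      exact ⟨c * a, by rw [map_mul, map_mul]; linear_combination algebraMap A K c * hab⟩
    have hJsub : ∀ a b, J a → J b → J (a - b) := by
      rintro a b ⟨a', ha⟩ ⟨b', hb⟩
      exact ⟨a' - b', by rw [map_sub, map_sub]; linear_combination ha - hb⟩
    obtain ⟨⟨a₀, b₀⟩, hsurj⟩ := IsLocalization.surj (nonZeroDivisors A) q
    have hb₀ne : (b₀ : A) ≠ 0 := mem_nonZeroDivisors_iff_ne_zero.mp b₀.2
    have hJb₀ : J (b₀ : A) := ⟨a₀, by linear_combination hsurj⟩
    have hspan : (b₀ : A) ∈ Submodule.span k {a : A | ∃ cf, Hm P l cf a} := by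
      have h1' : (b₀ : A) ∈ Algebra.adjoin k (Set.range x) := by
        rw [hgen]; exact Algebra.mem_top
      have h1 : (b₀ : A) ∈ Subalgebra.toSubmodule (Algebra.adjoin k (Set.range x)) :=
        (Subalgebra.mem_toSubmodule _).mpr h1'
      rw [Algebra.adjoin_eq_span] at h1
      refine Submodule.span_mono ?_ h1
      intro a ha
      simp only [SetLike.mem_coe] at ha
      induction ha using Submonoid.closure_induction with
      | mem a ha =>
        obtain ⟨i, rfl⟩ := ha
        exact ⟨Pi.single i 1, Hm_x hP hx hxne hcomm i⟩
      | one => exact ⟨0, Hm_one hP hx hxne hcomm⟩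
      | mul a b _ _ iha ihb =>
        obtain ⟨cfa, hca⟩ := iha
        obtain ⟨cfb, hcb⟩ := ihb
        exact ⟨cfa + cfb, Hm_mul hP hx hxne hcomm hca hcb⟩
    obtain ⟨M, hgood, hMsum⟩ := span_list hP hx hxne hcomm (b₀ : A) hspan
    obtain ⟨cf, c, hJc, hcne, hhmc⟩ := extract hP hx hxne hcomm hgen J hJP hJmul hJsub
      M.length M le_rfl hgood (b₀ : A) hJb₀ hb₀ne hMsum
    obtain ⟨a, hac⟩ := hJc
    have hcK : algebraMap A K c ≠ 0 := fun h0 =>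
      hcne ((IsFractionRing.injective A K) (by rw [h0, map_zero]))
    refine ⟨cf, a, c, hcne, ?_, ?_, ?_⟩
    · intro d
      refine IsFractionRing.injective A K ?_
      have h1 : Q (algebraMap A K d) (algebraMap A K c * q)
          = algebraMap A K c * Q (algebraMap A K d) q
            + q * Q (algebraMap A K d) (algebraMap A K c) := pb_mul_right hQ _ _ _
      rw [hac, hext, hq, hext, hhmc d] at h1
      calc algebraMap A K (P d a)
          = q * (algebraMap A K (Wt l cf d) * algebraMap A K c) := by
            rw [h1, map_mul]; ring
        _ = algebraMap A K (Wt l cf d) * (algebraMap A K c * q) := by ring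
        _ = algebraMap A K (Wt l cf d) * algebraMap A K a := by rw [hac]
        _ = algebraMap A K ((∑ i : Fin n, cf i • l i d) * a) := (map_mul _ _ _).symm
    · intro d; exact hhmc d
    · rw [eq_mul_inv_iff_mul_eq₀ hcK]
      linear_combination hac
  · -- backward direction
    rintro ⟨cf, a, b, hbne, ha, hb, rfl⟩ c
    have hbK : algebraMap A K b ≠ 0 := fun h0 =>
      hbne ((IsFractionRing.injective A K) (by rw [h0, map_zero]))
    have step1 : ∀ d : A,
        Q (algebraMap A K d) (algebraMap A K a * (algebraMap A K b)⁻¹) = 0 := by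
      intro d
      have h0 : algebraMap A K b * Q (algebraMap A K d) (algebraMap A K b)⁻¹
          + (algebraMap A K b)⁻¹
            * (algebraMap A K (∑ i : Fin n, cf i • l i d) * algebraMap A K b) = 0 := by
        have h1 : Q (algebraMap A K d) (1 : K) = 0 := pb_one_right hQ _
        rw [show (1 : K) = algebraMap A K b * (algebraMap A K b)⁻¹ from
          (mul_inv_cancel₀ hbK).symm, pb_mul_right hQ, hext, hb d, map_mul] at h1
        linear_combination h1
      have hQab : Q (algebraMap A K d) (algebraMap A K a * (algebraMap A K b)⁻¹)
          = algebraMap A K a * Q (algebraMap A K d) (algebraMap A K b)⁻¹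
            + (algebraMap A K b)⁻¹
              * (algebraMap A K (∑ i : Fin n, cf i • l i d) * algebraMap A K a) := by
        rw [pb_mul_right hQ, hext, ha d, map_mul]
      rw [hQab]
      refine mul_left_cancel₀ hbK ?_
      rw [mul_zero]
      linear_combination algebraMap A K a * h0
    obtain ⟨⟨r, s⟩, hcs⟩ := IsLocalization.surj (nonZeroDivisors A) c
    have hsne : (s : A) ≠ 0 := mem_nonZeroDivisors_iff_ne_zero.mp s.2
    have hsK : algebraMap A K (s : A) ≠ 0 := fun h0 =>
      hsne ((IsFractionRing.injective A K) (by rw [h0, map_zero]))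
    have hc : c = algebraMap A K r * (algebraMap A K (s : A))⁻¹ := by
      rw [eq_mul_inv_iff_mul_eq₀ hsK]; exact hcs
    have hsinv : Q ((algebraMap A K (s : A))⁻¹)
        (algebraMap A K a * (algebraMap A K b)⁻¹) = 0 := by
      have h1 : Q (algebraMap A K (s : A) * (algebraMap A K (s : A))⁻¹)
          (algebraMap A K a * (algebraMap A K b)⁻¹) = 0 := by
        rw [mul_inv_cancel₀ hsK]; exact pb_one_left hQ _
      rw [hQ.leibniz, step1 ((s : A)), mul_zero, add_zero] at h1
      rcases mul_eq_zero.mp h1 with h | h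
      · exact absurd h hsK
      · exact h
    rw [hc, hQ.leibniz, hsinv, step1 r, mul_zero, mul_zero, add_zero]
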